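/- Consider an n-bus network with admittance matrix Y ∈ ℂ^{n×n} whose bus set is partitioned as {0} ∪ A ∪ B, where 0 is the slack bus with fixed voltage v₀, and suppose Y_{ab} = Y_{ba} = 0 for all a ∈ A and b ∈ B (the two subnetworks share only the slack bus). Each non-slack bus i is either a PQ bus with specified complex injection s_i, enforcing V_i · conj((YV)_i) = s_i, or a PV bus with specified active power p_i and voltage magnitude w_i, enforcing Re(V_i · conj((YV)_i)) = p_i and |V_i| = w_i. Let Y^A (resp. Y^B) be the principal submatrix of Y on {0} ∪ A (resp. {0} ∪ B), with the same bus specifications and slack voltage v₀. Then the map sending a power flow solution V of the full network to the pair of its restrictions to {0} ∪ A and {0} ∪ B is a bijection between the solution set of the full network and the Cartesian product of the solution sets of the two subnetworks. -/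

import Mathlib

open scoped Classical

lemma restrict_mulVec {n : ℕ} [NeZero n] (Y : Matrix (Fin n) (Fin n) ℂ) (S : Set (Fin n))
    (V : Fin n → ℂ) (j : {k : Fin n // k = 0 ∨ k ∈ S})
    (hz : ∀ k : Fin n, ¬(k = 0 ∨ k ∈ S) → Y j.val k = 0) :
    (Y.submatrix Subtype.val Subtype.val).mulVec
      (fun k : {k : Fin n // k = 0 ∨ k ∈ S} => V k.val) j = Y.mulVec V j.val := by
  classical
  simp only [Matrix.mulVec, dotProduct, Matrix.submatrix_apply]
  have h1 : ∑ k ∈ Finset.univ.filter (fun k : Fin n => k = 0 ∨ k ∈ S), Y j.val k * V k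
      = ∑ k : Fin n, Y j.val k * V k := by
    refine Finset.sum_filter_of_ne fun k _ h => ?_
    by_contra hc
    exact h (by simp [hz k hc])
  rw [← h1, Finset.sum_subtype (p := fun k : Fin n => k = 0 ∨ k ∈ S) _ (fun k => by simp)
    (fun k => Y j.val k * V k)]

/-- Network whose buses partition as {0} ∪ A ∪ B with slack bus 0 (voltage v₀) and
Y_{ab} = Y_{ba} = 0 for a ∈ A, b ∈ B. Non-slack buses in `PQ` enforce
V_i conj((YV)_i) = s_i; the remaining non-slack (PV) buses enforce
Re(V_i conj((YV)_i)) = p_i and |V_i| = w_i. Restriction of voltages to the two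
subnetworks {0} ∪ A and {0} ∪ B (with the principal submatrices of Y, the same bus
specifications and slack voltage) is a bijection from the solution set of the full
network onto the Cartesian product of the solution sets of the two subnetworks. -/
theorem stmt4 (n : ℕ) [NeZero n] (Y : Matrix (Fin n) (Fin n) ℂ) (v₀ : ℂ)
    (A B : Set (Fin n))
    (hcover : ∀ i : Fin n, i = 0 ∨ i ∈ A ∨ i ∈ B)
    (hA0 : (0 : Fin n) ∉ A) (hB0 : (0 : Fin n) ∉ B) (hAB : Disjoint A B)
    (hY : ∀ a ∈ A, ∀ b ∈ B, Y a b = 0 ∧ Y b a = 0)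
    (PQ : Set (Fin n)) (s : Fin n → ℂ) (p w : Fin n → ℝ) :
    Set.BijOn
      (fun V : Fin n → ℂ =>
        ((fun i : {i : Fin n // i = 0 ∨ i ∈ A} => V i.val),
         (fun i : {i : Fin n // i = 0 ∨ i ∈ B} => V i.val)))
      -- solution set of the full network
      {V : Fin n → ℂ | V 0 = v₀ ∧ ∀ i, i ≠ 0 →
        (i ∈ PQ → V i * (starRingEnd ℂ) (Y.mulVec V i) = s i) ∧
        (i ∉ PQ → (V i * (starRingEnd ℂ) (Y.mulVec V i)).re = p i ∧
          ‖V i‖ = w i)}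
      -- product of the solution sets of the two subnetworks
      (({W : {i : Fin n // i = 0 ∨ i ∈ A} → ℂ | W ⟨0, Or.inl rfl⟩ = v₀ ∧
          ∀ i : {i : Fin n // i = 0 ∨ i ∈ A}, i.val ≠ 0 →
            (i.val ∈ PQ →
              W i * (starRingEnd ℂ)
                ((Y.submatrix Subtype.val Subtype.val).mulVec W i) = s i.val) ∧
            (i.val ∉ PQ →
              (W i * (starRingEnd ℂ)
                ((Y.submatrix Subtype.val Subtype.val).mulVec W i)).re = p i.val ∧
              ‖W i‖ = w i.val)}) ×ˢ
       ({W : {i : Fin n // i = 0 ∨ i ∈ B} → ℂ | W ⟨0, Or.inl rfl⟩ = v₀ ∧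
          ∀ i : {i : Fin n // i = 0 ∨ i ∈ B}, i.val ≠ 0 →
            (i.val ∈ PQ →
              W i * (starRingEnd ℂ)
                ((Y.submatrix Subtype.val Subtype.val).mulVec W i) = s i.val) ∧
            (i.val ∉ PQ →
              (W i * (starRingEnd ℂ)
                ((Y.submatrix Subtype.val Subtype.val).mulVec W i)).re = p i.val ∧
              ‖W i‖ = w i.val)})) := by
  classical
  -- off-block vanishing
  have hzA : ∀ i ∈ A, ∀ k : Fin n, ¬(k = 0 ∨ k ∈ A) → Y i k = 0 := by
    intro i hi k hk
    push_neg at hk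
    have hkB : k ∈ B := ((hcover k).resolve_left hk.1).resolve_left hk.2
    exact (hY i hi k hkB).1
  have hzB : ∀ i ∈ B, ∀ k : Fin n, ¬(k = 0 ∨ k ∈ B) → Y i k = 0 := by
    intro i hi k hk
    push_neg at hk
    have hkA : k ∈ A := ((hcover k).resolve_left hk.1).resolve_right hk.2
    exact (hY k hkA i hi).2
  constructor
  · -- MapsTo
    intro V hV
    obtain ⟨hV0, hVeq⟩ := hV
    constructor
    · refine ⟨hV0, fun i hi => ?_⟩
      have hiA : i.val ∈ A := i.prop.resolve_left hi
      rw [restrict_mulVec Y A V i (hzA i.val hiA)]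
      exact hVeq i.val hi
    · refine ⟨hV0, fun i hi => ?_⟩
      have hiB : i.val ∈ B := i.prop.resolve_left hi
      rw [restrict_mulVec Y B V i (hzB i.val hiB)]
      exact hVeq i.val hi
  constructor
  · -- InjOn
    intro V _ V' _ h
    have h1 := congrArg Prod.fst h
    have h2 := congrArg Prod.snd h
    funext i
    rcases hcover i with hi | hi | hi
    · exact hi ▸ congrFun h1 ⟨0, Or.inl rfl⟩
    · exact congrFun h1 ⟨i, Or.inr hi⟩
    · exact congrFun h2 ⟨i, Or.inr hi⟩
  · -- SurjOn
    intro q hq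
    obtain ⟨⟨hq10, hq1⟩, ⟨hq20, hq2⟩⟩ := hq
    set V : Fin n → ℂ := fun i =>
      if h : i = 0 ∨ i ∈ A then q.1 ⟨i, h⟩
      else q.2 ⟨i, Or.inr (((hcover i).resolve_left fun e => h (Or.inl e)).resolve_left
        fun hA => h (Or.inr hA))⟩ with hVdef
    have hresA : (fun k : {k : Fin n // k = 0 ∨ k ∈ A} => V k.val) = q.1 := by
      funext k
      simp only [hVdef, dif_pos k.prop]
    have hresB : (fun k : {k : Fin n // k = 0 ∨ k ∈ B} => V k.val) = q.2 := by
      funext k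
      rcases k.prop with h0 | hkB
      · have hk : k = ⟨0, Or.inl rfl⟩ := Subtype.ext h0
        rw [hk]
        show V 0 = q.2 ⟨0, Or.inl rfl⟩
        have : V 0 = q.1 ⟨0, Or.inl rfl⟩ := by
          simp only [hVdef, dif_pos (Or.inl rfl : (0 : Fin n) = 0 ∨ (0 : Fin n) ∈ A)]
        rw [this, hq10, hq20]
      · have hnot : ¬(k.val = 0 ∨ k.val ∈ A) := by
          rintro (h0 | hA)
          · exact hB0 (h0 ▸ hkB)
          · exact (hAB.le_bot ⟨hA, hkB⟩)
        simp only [hVdef, dif_neg hnot]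
    refine ⟨V, ⟨?_, ?_⟩, ?_⟩
    · -- V 0 = v₀
      have : V 0 = q.1 ⟨0, Or.inl rfl⟩ := by
        simp only [hVdef, dif_pos (Or.inl rfl : (0 : Fin n) = 0 ∨ (0 : Fin n) ∈ A)]
      rw [this, hq10]
    · -- equations
      intro i hi0
      rcases hcover i with hi | hiA | hiB
      · exact absurd hi hi0
      · have hVi : V i = q.1 ⟨i, Or.inr hiA⟩ := by
          simp only [hVdef, dif_pos (Or.inr hiA : i = 0 ∨ i ∈ A)]
        have hmv : Y.mulVec V i =
            (Y.submatrix Subtype.val Subtype.val).mulVec q.1 (⟨i, Or.inr hiA⟩ : {k : Fin n // k = 0 ∨ k ∈ A}) := by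
          rw [← hresA, restrict_mulVec Y A V (⟨i, Or.inr hiA⟩ : {k : Fin n // k = 0 ∨ k ∈ A}) (hzA i hiA)]
        rw [hVi, hmv]
        exact hq1 ⟨i, Or.inr hiA⟩ hi0
      · have hVi : V i = q.2 ⟨i, Or.inr hiB⟩ := by
          have := congrFun hresB ⟨i, Or.inr hiB⟩
          exact this
        have hmv : Y.mulVec V i =
            (Y.submatrix Subtype.val Subtype.val).mulVec q.2 (⟨i, Or.inr hiB⟩ : {k : Fin n // k = 0 ∨ k ∈ B}) := by
          rw [← hresB, restrict_mulVec Y B V (⟨i, Or.inr hiB⟩ : {k : Fin n // k = 0 ∨ k ∈ B}) (hzB i hiB)]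
        rw [hVi, hmv]
        exact hq2 ⟨i, Or.inr hiB⟩ hi0
    · -- image is q
      exact Prod.ext hresA hresB
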